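/- Let λ > 0 and let (c, Q) be a spectral pair at λ, and set ⟨θ⟩ = ∫_Θ θ Q(θ) dθ. Then ⟨θ⟩ = (θmax + θmin)/2 + (α / (λ² |Θ|)) ∫_Θ (Q'(θ)/Q(θ))² dθ; in particular ⟨θ⟩ > (θmax + θmin)/2. -/

import Mathlib

open Set Filter MeasureTheory

/-- A spectral pair `(c, Q)` at `lam` for parameters `thmin thmax alpha r`:
`Q` is positive, normalized, twice continuously differentiable, solves the eigenproblem
on `(thmin, thmax)` and satisfies Neumann boundary conditions. -/
def IsSpectralPair (thmin thmax alpha r lam c : ℝ) (Q : ℝ → ℝ) : Prop :=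
  ContDiff ℝ 2 Q ∧
  (∀ θ ∈ Set.Icc thmin thmax, 0 < Q θ) ∧
  (∫ θ in Set.Ioo thmin thmax, Q θ) = 1 ∧
  (∀ θ ∈ Set.Ioo thmin thmax,
    alpha * iteratedDeriv 2 Q θ + (-(lam * c) + θ * lam ^ 2 + r) * Q θ = 0) ∧
  deriv Q thmin = 0 ∧ deriv Q thmax = 0

lemma spectral_alg_aux (thmin thmax alpha r lam c : ℝ)
    (hlam0 : lam ≠ 0) (halpha0 : alpha ≠ 0) (hba0 : thmax - thmin ≠ 0) :
    (lam * c - r) / lam ^ 2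
      = (thmax + thmin) / 2
        + alpha / (lam ^ 2 * (thmax - thmin))
          * (((lam * c - r) * (thmax - thmin) - lam ^ 2 * (thmax ^ 2 - thmin ^ 2) / 2) / alpha) := by
  field_simp
  ring

set_option maxHeartbeats 1000000 in
theorem statement5 (thmin thmax alpha r : ℝ)
    (hth : 0 < thmin) (hthth : thmin < thmax) (halpha : 0 < alpha) (hr : 0 < r)
    (lam c : ℝ) (hlam : 0 < lam) (Q : ℝ → ℝ)
    (hQ : IsSpectralPair thmin thmax alpha r lam c Q) :
    (∫ θ in Set.Ioo thmin thmax, θ * Q θ)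
      = (thmax + thmin) / 2
        + alpha / (lam ^ 2 * (thmax - thmin))
          * ∫ θ in Set.Ioo thmin thmax, (deriv Q θ / Q θ) ^ 2 ∧
    (thmax + thmin) / 2 < ∫ θ in Set.Ioo thmin thmax, θ * Q θ := by
  obtain ⟨hC2, hpos, hnorm, heqn, hda, hdb⟩ := hQ
  have hab : thmin ≤ thmax := hthth.le
  have hlam0 : lam ≠ 0 := hlam.ne'
  have halpha0 : alpha ≠ 0 := halpha.ne'
  have hba0 : thmax - thmin ≠ 0 := sub_ne_zero.mpr hthth.ne'
  have hcontQ : Continuous Q := hC2.continuous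
  have hcontQ' : Continuous (deriv Q) := hC2.continuous_deriv one_le_two
  have hcontQ'' : Continuous (iteratedDeriv 2 Q) := hC2.continuous_iteratedDeriv 2 le_rfl
  have hdiffQ : Differentiable ℝ Q := hC2.differentiable two_ne_zero
  have hdiffQ' : Differentiable ℝ (deriv Q) :=
    ((hC2.iterate_deriv' 1 1).differentiable (by norm_num) : Differentiable ℝ (deriv^[1] Q))
  have hHD2 : ∀ x : ℝ, HasDerivAt (deriv Q) (iteratedDeriv 2 Q x) x := by
    intro x
    rw [iteratedDeriv_succ, iteratedDeriv_one]
    exact (hdiffQ' x).hasDerivAt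
  -- conversion from Ioo to interval integrals
  have hIoo : ∀ g : ℝ → ℝ, (∫ θ in Set.Ioo thmin thmax, g θ) = ∫ θ in thmin..thmax, g θ := by
    intro g
    rw [intervalIntegral.integral_of_le hab, MeasureTheory.integral_Ioc_eq_integral_Ioo]
  have hQne : ∀ x ∈ Set.Icc thmin thmax, Q x ≠ 0 := fun x hx => (hpos x hx).ne'
  -- ∫ Q'' = 0
  have hIQ'' : (∫ θ in Set.Ioo thmin thmax, iteratedDeriv 2 Q θ) = 0 := by
    rw [hIoo]
    rw [intervalIntegral.integral_eq_sub_of_hasDerivAt (fun x _ => hHD2 x)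
      (hcontQ''.intervalIntegrable _ _), hda, hdb, sub_zero]
  -- first moment value
  have hintQ : IntegrableOn Q (Set.Ioo thmin thmax) :=
    (hcontQ.integrableOn_Icc).mono_set Set.Ioo_subset_Icc_self
  have hintQ'' : IntegrableOn (iteratedDeriv 2 Q) (Set.Ioo thmin thmax) :=
    (hcontQ''.integrableOn_Icc).mono_set Set.Ioo_subset_Icc_self
  have hI2 : (∫ θ in Set.Ioo thmin thmax, θ * Q θ) = (lam * c - r) / lam ^ 2 := by
    have hcg : (∫ θ in Set.Ioo thmin thmax, θ * Q θ)
        = ∫ θ in Set.Ioo thmin thmax,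
            ((lam * c - r) / lam ^ 2) * Q θ - (alpha / lam ^ 2) * iteratedDeriv 2 Q θ := by
      refine MeasureTheory.setIntegral_congr_fun measurableSet_Ioo (fun θ hθ => ?_)
      have h := heqn θ hθ
      have hl2 : lam ^ 2 ≠ 0 := pow_ne_zero 2 hlam0
      field_simp
      nlinarith [h]
    rw [hcg, MeasureTheory.integral_sub (hintQ.const_mul _) (hintQ''.const_mul _),
      MeasureTheory.integral_const_mul, MeasureTheory.integral_const_mul, hnorm, hIQ'', mul_one,
      mul_zero, sub_zero]
  -- ∫ G = 0 where G is derivative of Q'/Q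
  set G : ℝ → ℝ := fun x =>
    (iteratedDeriv 2 Q x * Q x - deriv Q x * deriv Q x) / Q x ^ 2 with hG
  have hHDF : ∀ x ∈ Set.uIcc thmin thmax, HasDerivAt (fun y => deriv Q y / Q y) (G x) x := by
    intro x hx
    rw [Set.uIcc_of_le hab] at hx
    exact (hHD2 x).div (hdiffQ x).hasDerivAt (hQne x hx)
  have hcontG : ContinuousOn G (Set.Icc thmin thmax) := by
    apply ContinuousOn.div
    · exact (hcontQ''.continuousOn.mul hcontQ.continuousOn).sub
        (hcontQ'.continuousOn.mul hcontQ'.continuousOn)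
    · exact (hcontQ.pow 2).continuousOn
    · exact fun x hx => pow_ne_zero 2 (hQne x hx)
  have hIG : (∫ θ in Set.Ioo thmin thmax, G θ) = 0 := by
    rw [hIoo]
    have hcontG' : ContinuousOn G (Set.uIcc thmin thmax) := by
      rw [Set.uIcc_of_le hab]; exact hcontG
    rw [intervalIntegral.integral_eq_sub_of_hasDerivAt hHDF hcontG'.intervalIntegrable]
    rw [hda, hdb]
    simp
  -- ∫ of linear part
  have hIlin : (∫ θ in Set.Ioo thmin thmax, (lam * c - θ * lam ^ 2 - r) / alpha)
      = ((lam * c - r) * (thmax - thmin) - lam ^ 2 * (thmax ^ 2 - thmin ^ 2) / 2) / alpha := by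
    rw [hIoo]
    rw [intervalIntegral.integral_div]
    have h1 : (∫ θ in thmin..thmax, (lam * c - θ * lam ^ 2 - r))
        = ∫ θ in thmin..thmax, ((lam * c - r) - lam ^ 2 * θ) := by
      congr 1; ext θ; ring
    have hint2 : IntervalIntegrable (fun θ : ℝ => lam ^ 2 * θ) volume thmin thmax :=
      Continuous.intervalIntegrable (by continuity) _ _
    rw [h1, intervalIntegral.integral_sub intervalIntegrable_const hint2,
      intervalIntegral.integral_const, intervalIntegral.integral_const_mul, integral_id]
    simp only [smul_eq_mul]
    ring
  -- value of ∫ (Q'/Q)^2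
  have hI3 : (∫ θ in Set.Ioo thmin thmax, (deriv Q θ / Q θ) ^ 2)
      = ((lam * c - r) * (thmax - thmin) - lam ^ 2 * (thmax ^ 2 - thmin ^ 2) / 2) / alpha := by
    have hcg : (∫ θ in Set.Ioo thmin thmax, (deriv Q θ / Q θ) ^ 2)
        = ∫ θ in Set.Ioo thmin thmax, ((lam * c - θ * lam ^ 2 - r) / alpha - G θ) := by
      refine MeasureTheory.setIntegral_congr_fun measurableSet_Ioo (fun θ hθ => ?_)
      have h := heqn θ hθ
      have hQθ : Q θ ≠ 0 := hQne θ (Set.Ioo_subset_Icc_self hθ)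
      have hD : alpha * iteratedDeriv 2 Q θ = (lam * c - θ * lam ^ 2 - r) * Q θ := by
        linear_combination h
      simp only [hG]
      field_simp
      linear_combination (Q θ) * hD
    have hintlin : IntegrableOn (fun θ => (lam * c - θ * lam ^ 2 - r) / alpha)
        (Set.Ioo thmin thmax) := by
      have hcl : Continuous fun θ : ℝ => (lam * c - θ * lam ^ 2 - r) / alpha := by continuity
      exact hcl.integrableOn_Icc.mono_set Set.Ioo_subset_Icc_self
    have hintG : IntegrableOn G (Set.Ioo thmin thmax) :=
      (hcontG.integrableOn_Icc).mono_set Set.Ioo_subset_Icc_self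
    rw [hcg, MeasureTheory.integral_sub hintlin hintG, hIG, sub_zero, hIlin]
  -- positivity of ∫ (Q'/Q)^2
  have hI3pos : 0 < ∫ θ in Set.Ioo thmin thmax, (deriv Q θ / Q θ) ^ 2 := by
    set f : ℝ → ℝ := fun θ => (deriv Q θ / Q θ) ^ 2 with hf
    have hintf : IntegrableOn f (Set.Ioo thmin thmax) := by
      apply (ContinuousOn.integrableOn_Icc ?_).mono_set Set.Ioo_subset_Icc_self
      exact ((hcontQ'.continuousOn.div hcontQ.continuousOn hQne).pow 2)
    have hnonneg : 0 ≤ᶠ[ae (volume.restrict (Set.Ioo thmin thmax))] f :=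
      Filter.Eventually.of_forall (fun x => sq_nonneg _)
    rw [MeasureTheory.setIntegral_pos_iff_support_of_nonneg_ae hnonneg hintf]
    -- find a point where deriv Q ≠ 0
    have hex : ∃ θ0 ∈ Set.Ioo thmin thmax, deriv Q θ0 ≠ 0 := by
      by_contra hcon
      push_neg at hcon
      have hzero : ∀ θ ∈ Set.Ioo thmin thmax, iteratedDeriv 2 Q θ = 0 := by
        intro θ hθ
        rw [iteratedDeriv_succ, iteratedDeriv_one]
        have : deriv Q =ᶠ[nhds θ] fun _ => (0 : ℝ) := by
          filter_upwards [isOpen_Ioo.mem_nhds hθ] with x hx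
          exact hcon x hx
        rw [this.deriv_eq]
        simp
      have hcoef : ∀ θ ∈ Set.Ioo thmin thmax, -(lam * c) + θ * lam ^ 2 + r = 0 := by
        intro θ hθ
        have h := heqn θ hθ
        rw [hzero θ hθ, mul_zero, zero_add] at h
        exact (mul_eq_zero.mp h).resolve_right (hQne θ (Set.Ioo_subset_Icc_self hθ))
      have hθ1 : (2 * thmin + thmax) / 3 ∈ Set.Ioo thmin thmax :=
        Set.mem_Ioo.mpr ⟨by linarith, by linarith⟩
      have hθ2 : (thmin + 2 * thmax) / 3 ∈ Set.Ioo thmin thmax :=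
        Set.mem_Ioo.mpr ⟨by linarith, by linarith⟩
      have e1 := hcoef _ hθ1
      have e2 := hcoef _ hθ2
      have key : 0 < (thmax - thmin) / 3 * lam ^ 2 := mul_pos (by linarith) (pow_pos hlam 2)
      linarith [e1, e2, key]
    obtain ⟨θ0, hθ0, hd0⟩ := hex
    have hfθ0 : 0 < f θ0 := by
      have : deriv Q θ0 / Q θ0 ≠ 0 :=
        div_ne_zero hd0 (hQne θ0 (Set.Ioo_subset_Icc_self hθ0))
      positivity
    have hcf : ContinuousAt f θ0 := by
      apply ContinuousAt.pow
      exact (hcontQ'.continuousAt).div hcontQ.continuousAt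
        (hQne θ0 (Set.Ioo_subset_Icc_self hθ0))
    have hev : ∀ᶠ x in nhds θ0, 0 < f x := hcf (Ioi_mem_nhds hfθ0)
    have hmem : {x | 0 < f x ∧ x ∈ Set.Ioo thmin thmax} ∈ nhds θ0 :=
      hev.and (isOpen_Ioo.mem_nhds hθ0)
    obtain ⟨U, hUsub, hUopen, hUmem⟩ := mem_nhds_iff.mp hmem
    calc (0 : ENNReal) < volume U := hUopen.measure_pos volume ⟨θ0, hUmem⟩
      _ ≤ volume (Function.support f ∩ Set.Ioo thmin thmax) := by
          apply measure_mono
          intro x hx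
          obtain ⟨h1, h2⟩ := hUsub hx
          exact ⟨h1.ne', h2⟩
    -- done
  -- combine
  have hmain : (∫ θ in Set.Ioo thmin thmax, θ * Q θ)
      = (thmax + thmin) / 2
        + alpha / (lam ^ 2 * (thmax - thmin))
          * ∫ θ in Set.Ioo thmin thmax, (deriv Q θ / Q θ) ^ 2 := by
    rw [hI2, hI3]
    exact spectral_alg_aux thmin thmax alpha r lam c hlam0 halpha0 hba0
  refine ⟨hmain, ?_⟩
  rw [hmain]
  have hc : 0 < alpha / (lam ^ 2 * (thmax - thmin)) :=
    div_pos halpha (mul_pos (pow_pos hlam 2) (sub_pos.mpr hthth))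
  nlinarith [mul_pos hc hI3pos]
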